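/- Let F be a finite field with q elements. The number of pairs (g0, g1) ∈ F² × F² such that all four entries g0,1, g0,2, g1,1, g1,2 are nonzero and g1,1·g0,2 − g1,2·g0,1 ≠ 0 equals (q−1)³·(q−2). -/

import Mathlib

theorem stmt0 (F : Type*) [Field F] [Fintype F] :
    Nat.card {p : (F × F) × (F × F) //
      p.1.1 ≠ 0 ∧ p.1.2 ≠ 0 ∧ p.2.1 ≠ 0 ∧ p.2.2 ≠ 0 ∧
      p.2.1 * p.1.2 - p.2.2 * p.1.1 ≠ 0}
    = (Fintype.card F - 1) ^ 3 * (Fintype.card F - 2) := by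
  classical
  let T := {a : F // a ≠ 0} × {b : F // b ≠ 0} × {c : F // c ≠ 0} × {t : F // t ≠ 0 ∧ t ≠ 1}
  have e : {p : (F × F) × (F × F) //
      p.1.1 ≠ 0 ∧ p.1.2 ≠ 0 ∧ p.2.1 ≠ 0 ∧ p.2.2 ≠ 0 ∧
      p.2.1 * p.1.2 - p.2.2 * p.1.1 ≠ 0} ≃ T := by
    refine ⟨fun ⟨⟨⟨a,b⟩,⟨c,d⟩⟩, ha, hb, hc, hd, h⟩ =>
      ⟨⟨a, ha⟩, ⟨b, hb⟩, ⟨c, hc⟩, ⟨d * a / (c * b), ?_, ?_⟩⟩,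
      fun ⟨⟨a,ha⟩, ⟨b,hb⟩, ⟨c,hc⟩, ⟨t,ht0,ht1⟩⟩ =>
      ⟨⟨⟨a,b⟩,⟨c, t * c * b / a⟩⟩, ha, hb, hc, ?_, ?_⟩, ?_, ?_⟩
    · exact div_ne_zero (mul_ne_zero hd ha) (mul_ne_zero hc hb)
    · intro heq
      apply h
      field_simp at heq
      linear_combination -heq
    · exact div_ne_zero (mul_ne_zero (mul_ne_zero ht0 hc) hb) ha
    · rw [sub_ne_zero]
      intro heq
      apply ht1
      field_simp at heq
      exact heq.symm
    · rintro ⟨⟨⟨a,b⟩,⟨c,d⟩⟩, ha, hb, hc, hd, h⟩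
      have key : d * a / (c * b) * c * b / a = d := by
        field_simp
      simp only [key]
    · rintro ⟨⟨a,ha⟩, ⟨b,hb⟩, ⟨c,hc⟩, ⟨t,ht0,ht1⟩⟩
      have key : t * c * b / a * a / (c * b) = t := by
        field_simp
      simp only [key]
  rw [Nat.card_congr e]
  have h1 : Nat.card {a : F // a ≠ 0} = Fintype.card F - 1 := by
    rw [Nat.card_eq_fintype_card]
    simpa using Fintype.card_subtype_compl (· = (0 : F))
  have h2 : Nat.card {t : F // t ≠ 0 ∧ t ≠ 1} = Fintype.card F - 2 := by
    rw [Nat.card_eq_fintype_card]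
    have hp : (fun t : F => t ≠ 0 ∧ t ≠ 1) = fun t => ¬ (t ∈ ({0,1} : Finset F)) := by
      funext t; simp [not_or]
    have : Fintype.card {t : F // t ≠ 0 ∧ t ≠ 1}
        = Fintype.card {t : F // ¬ (t ∈ ({0,1} : Finset F))} := by
      exact Fintype.card_congr (Equiv.subtypeEquivProp hp)
    rw [this, Fintype.card_subtype_compl]
    congr 1
    rw [Fintype.card_coe]
    simp
  simp only [T, Nat.card_prod, h1, h2]
  ring
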